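/- Assume H is connected and ∑_{v∈V} s_v = 0. Let μ∈𝓜(s), define r∈ℝ^E by r_e = μ_e/w_e, let μ* be a minimizer of q over 𝓜(s), let μ̄ be a minimizer of ν ↦ ∑_{e∈E} r_e ν_e over 𝓜(s), and set δ = q(μ) − q(μ*). Then 0 ≤ 2q(μ) − L_s(r) = ∑_{e∈E} r_e (μ_e − μ̄_e) ≤ δ + √(2δ)·‖μ − μ̄‖_{w⁻¹}. Moreover, if x_r∈𝓧₀ attains L_s(r), i.e. x_r maximizes ⟨s,x⟩ over x∈𝓧₀ with R_e(x) ≤ r_e for all e, then 𝓟(x_r) − OPT ≤ √(2δ)·‖μ − μ̄‖_{w⁻¹}, where OPT = min_{x∈𝓧₀} 𝓟(x). -/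

import Mathlib

open Finset
open scoped RealInnerProductSpace

section

variable {V : Type*} [Fintype V] [DecidableEq V] [Nonempty V]
variable {E : Type*} [Fintype E]

/-- The edge range `R_e(x) = max_{u∈e} x_u - min_{v∈e} x_v`. -/
noncomputable def eRange (edge : E → Finset V) (hne : ∀ e, (edge e).Nonempty)
    (x : V → ℝ) (e : E) : ℝ :=
  (edge e).sup' (hne e) x - (edge e).inf' (hne e) x

/-- Weighted degree `d_v = ∑_{e ∋ v} w_e`. -/
noncomputable def degw (edge : E → Finset V) (w : E → ℝ) (v : V) : ℝ :=
  ∑ e ∈ univ.filter (fun e => v ∈ edge e), w e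

/-- Membership in `𝓧₀`: weighted zero-mean. -/
def memX0 (edge : E → Finset V) (w : E → ℝ) (x : V → ℝ) : Prop :=
  ∑ v, degw edge w v * x v = 0

/-- The energy `𝓔_H(x)`. -/
noncomputable def energyH (edge : E → Finset V) (hne : ∀ e, (edge e).Nonempty)
    (w : E → ℝ) (x : V → ℝ) : ℝ :=
  (1 / 2) * ∑ e, w e * (eRange edge hne x e) ^ 2

/-- The Poisson objective `𝓟(x) = 𝓔_H(x) - ⟨s,x⟩`. -/
noncomputable def Pobj (edge : E → Finset V) (hne : ∀ e, (edge e).Nonempty)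
    (w : E → ℝ) (s : V → ℝ) (x : V → ℝ) : ℝ :=
  energyH edge hne w x - ∑ v, s v * x v

/-- Connectivity of the hypergraph. -/
def HConn (edge : E → Finset V) : Prop :=
  ∀ u v : V, ∃ (k : ℕ) (p : Fin (k + 1) → V) (c : Fin k → E),
    p 0 = u ∧ p (Fin.last k) = v ∧
    ∀ i : Fin k, p i.castSucc ∈ edge (c i) ∧ p i.succ ∈ edge (c i)

/-- The quadratic mass objective `q(μ) = (1/2) ∑_e μ_e²/w_e`. -/
noncomputable def qObj (w : E → ℝ) (μ : E → ℝ) : ℝ := (1 / 2) * ∑ e, (μ e) ^ 2 / w e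

/-- The weighted norm `‖z‖_{w⁻¹} = (∑_e z_e²/w_e)^{1/2}`. -/
noncomputable def wInvNorm (w : E → ℝ) (z : E → ℝ) : ℝ :=
  Real.sqrt (∑ e, (z e) ^ 2 / w e)

/-- The set `𝓜(s)` of feasible edge-mass vectors for demand `s`. -/
def MassSet (edge : E → Finset V) (s : V → ℝ) : Set (E → ℝ) :=
  {μ | (∀ e, 0 ≤ μ e) ∧ ∃ p n : E → V → ℝ,
    (∀ e, ∀ v ∈ edge e, 0 ≤ p e v) ∧ (∀ e, ∀ v ∈ edge e, 0 ≤ n e v) ∧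
    (∀ v, ∑ e ∈ univ.filter (fun e => v ∈ edge e), (p e v - n e v) = s v) ∧
    (∀ e, ∑ v ∈ edge e, p e v = μ e) ∧ (∀ e, ∑ v ∈ edge e, n e v = μ e)}

/-- The support value `L_s(r)`, as a supremum. -/
noncomputable def suppVal (edge : E → Finset V) (hne : ∀ e, (edge e).Nonempty)
    (w : E → ℝ) (s : V → ℝ) (r : E → ℝ) : ℝ :=
  sSup {c : ℝ | ∃ x : V → ℝ, memX0 edge w x ∧
    (∀ e, eRange edge hne x e ≤ r e) ∧ c = ∑ v, s v * x v}

section Aux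

variable [DecidableEq E]

lemma eRange_nonneg (edge : E → Finset V) (hne : ∀ e, (edge e).Nonempty)
    (x : V → ℝ) (e : E) : 0 ≤ eRange edge hne x e := by
  obtain ⟨v, hv⟩ := hne e
  have h1 : x v ≤ (edge e).sup' (hne e) x := Finset.le_sup' x hv
  have h2 : (edge e).inf' (hne e) x ≤ x v := Finset.inf'_le x hv
  unfold eRange; linarith

lemma eRange_le_iff (edge : E → Finset V) (hne : ∀ e, (edge e).Nonempty)
    (x : V → ℝ) (e : E) (a : ℝ) :
    eRange edge hne x e ≤ a ↔ ∀ u ∈ edge e, ∀ v ∈ edge e, x u - x v ≤ a := by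
  constructor
  · intro h u hu v hv
    have h1 : x u ≤ (edge e).sup' (hne e) x := Finset.le_sup' x hu
    have h2 : (edge e).inf' (hne e) x ≤ x v := Finset.inf'_le x hv
    unfold eRange at h; linarith
  · intro h
    unfold eRange
    rw [sub_le_iff_le_add]
    apply Finset.sup'_le
    intro u hu
    rw [← sub_le_iff_le_add']
    apply Finset.le_inf'
    intro v hv
    linarith [h u hu v hv]

lemma eRange_shift_le (edge : E → Finset V) (hne : ∀ e, (edge e).Nonempty)
    (x : V → ℝ) (c : ℝ) (e : E) (a : ℝ) (h : eRange edge hne x e ≤ a) :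
    eRange edge hne (fun v => x v - c) e ≤ a := by
  rw [eRange_le_iff] at h ⊢
  intro u hu v hv
  have := h u hu v hv
  show x u - c - (x v - c) ≤ a
  linarith

lemma eRange_zero (edge : E → Finset V) (hne : ∀ e, (edge e).Nonempty) (e : E) :
    eRange edge hne (fun _ => (0:ℝ)) e = 0 := by
  have h1 : eRange edge hne (fun _ => (0:ℝ)) e ≤ 0 := by
    rw [eRange_le_iff]; intro u _ v _; simp
  linarith [eRange_nonneg edge hne (fun _ => (0:ℝ)) e]

/-- Shift a vector into `𝓧₀` without changing ranges or the objective. -/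
lemma shift_to_X0 (edge : E → Finset V) (hne : ∀ e, (edge e).Nonempty)
    (w : E → ℝ) (hw : ∀ e, 0 < w e) (s : V → ℝ) (hs : ∑ v, s v = 0) (x : V → ℝ) :
    ∃ x' : V → ℝ, memX0 edge w x' ∧
      (∀ e a, eRange edge hne x e ≤ a → eRange edge hne x' e ≤ a) ∧
      ∑ v, s v * x' v = ∑ v, s v * x v := by
  by_cases hD : ∑ v, degw edge w v = 0
  · refine ⟨x, ?_, fun e a h => h, rfl⟩
    have hd0 : ∀ v, degw edge w v = 0 := by
      intro v
      have hnn : ∀ v, 0 ≤ degw edge w v := fun v =>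
        Finset.sum_nonneg fun e _ => (hw e).le
      have := (Finset.sum_eq_zero_iff_of_nonneg (fun v _ => hnn v)).mp hD
      exact this v (Finset.mem_univ v)
    unfold memX0
    simp [hd0]
  · set D := ∑ v, degw edge w v
    set c := (∑ v, degw edge w v * x v) / D
    refine ⟨fun v => x v - c, ?_, fun e a h => eRange_shift_le edge hne x c e a h, ?_⟩
    · unfold memX0
      have : ∑ v, degw edge w v * (x v - c) = (∑ v, degw edge w v * x v) - c * D := by
        have : ∀ v, degw edge w v * (x v - c) = degw edge w v * x v - c * degw edge w v := by
          intro v; ring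
        rw [Finset.sum_congr rfl (fun v _ => this v), Finset.sum_sub_distrib, ← Finset.mul_sum]
      rw [this]
      show _ - (∑ v, degw edge w v * x v) / D * D = 0
      rw [div_mul_cancel₀ _ hD, sub_self]
    · have h2 : ∑ v, s v * (x v - c) = (∑ v, s v * x v) - (∑ v, s v) * c := by
        have h3 : ∑ v, s v * (x v - c) = ∑ v, (s v * x v - s v * c) :=
          Finset.sum_congr rfl (fun v _ => by ring)
        rw [h3, Finset.sum_sub_distrib, ← Finset.sum_mul]
      rw [h2, hs]; ring

/-- Weak duality: for any `ν ∈ 𝓜(s)` and any `x`, `⟨s,x⟩ ≤ ∑ ν_e R_e(x)`. -/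
lemma weak_duality (edge : E → Finset V) (hne : ∀ e, (edge e).Nonempty)
    (s : V → ℝ) (x : V → ℝ) (ν : E → ℝ) (hν : ν ∈ MassSet edge s) :
    ∑ v, s v * x v ≤ ∑ e, ν e * eRange edge hne x e := by
  obtain ⟨hν0, p, n, hp, hn, hnet, hpm, hnm⟩ := hν
  have key : ∑ v, s v * x v = ∑ e, ∑ v ∈ edge e, (p e v - n e v) * x v := by
    calc ∑ v, s v * x v
        = ∑ v, (∑ e ∈ univ.filter (fun e => v ∈ edge e), (p e v - n e v)) * x v := by
          apply Finset.sum_congr rfl; intro v _; rw [hnet v]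
      _ = ∑ v, ∑ e ∈ univ.filter (fun e => v ∈ edge e), (p e v - n e v) * x v := by
          apply Finset.sum_congr rfl; intro v _; rw [Finset.sum_mul]
      _ = ∑ e, ∑ v ∈ univ.filter (fun v => v ∈ edge e), (p e v - n e v) * x v := by
          rw [Finset.sum_comm' (s := univ) (t := fun v => univ.filter (fun e => v ∈ edge e))
            (t' := univ) (s' := fun e => univ.filter (fun v => v ∈ edge e))]
          intro v e; simp
      _ = ∑ e, ∑ v ∈ edge e, (p e v - n e v) * x v := by
          apply Finset.sum_congr rfl; intro e _
          apply Finset.sum_congr _ (fun v _ => rfl)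
          ext v; simp
  rw [key]
  apply Finset.sum_le_sum
  intro e _
  have hsup : ∑ v ∈ edge e, p e v * x v ≤ ν e * (edge e).sup' (hne e) x := by
    rw [← hpm e, Finset.sum_mul]
    apply Finset.sum_le_sum
    intro v hv
    exact mul_le_mul_of_nonneg_left (Finset.le_sup' x hv) (hp e v hv)
  have hinf : ν e * (edge e).inf' (hne e) x ≤ ∑ v ∈ edge e, n e v * x v := by
    rw [← hnm e, Finset.sum_mul]
    apply Finset.sum_le_sum
    intro v hv
    exact mul_le_mul_of_nonneg_left (Finset.inf'_le x hv) (hn e v hv)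
  have expand : ∑ v ∈ edge e, (p e v - n e v) * x v
      = (∑ v ∈ edge e, p e v * x v) - ∑ v ∈ edge e, n e v * x v := by
    rw [← Finset.sum_sub_distrib]
    apply Finset.sum_congr rfl; intro v _; ring
  rw [expand]
  unfold eRange
  nlinarith [hsup, hinf]


lemma massSet_congr (edge : E → Finset V) {s1 s2 : V → ℝ} (h : ∀ v, s1 v = s2 v) :
    MassSet edge s1 = MassSet edge s2 := by
  have : s1 = s2 := funext h
  rw [this]

lemma massSet_zero (edge : E → Finset V) :
    (fun _ : E => (0:ℝ)) ∈ MassSet edge (fun _ => 0) := by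
  refine ⟨fun e => le_refl 0, fun _ _ => 0, fun _ _ => 0, ?_, ?_, ?_, ?_, ?_⟩ <;> simp

lemma massSet_add (edge : E → Finset V) {s1 s2 : V → ℝ} {μ1 μ2 : E → ℝ}
    (h1 : μ1 ∈ MassSet edge s1) (h2 : μ2 ∈ MassSet edge s2) :
    (fun e => μ1 e + μ2 e) ∈ MassSet edge (fun v => s1 v + s2 v) := by
  obtain ⟨h10, p1, n1, hp1, hn1, hnet1, hpm1, hnm1⟩ := h1
  obtain ⟨h20, p2, n2, hp2, hn2, hnet2, hpm2, hnm2⟩ := h2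
  refine ⟨fun e => add_nonneg (h10 e) (h20 e),
    fun e v => p1 e v + p2 e v, fun e v => n1 e v + n2 e v,
    fun e v hv => add_nonneg (hp1 e v hv) (hp2 e v hv),
    fun e v hv => add_nonneg (hn1 e v hv) (hn2 e v hv), ?_, ?_, ?_⟩
  · intro v
    have : ∀ e ∈ univ.filter (fun e => v ∈ edge e),
        p1 e v + p2 e v - (n1 e v + n2 e v) = (p1 e v - n1 e v) + (p2 e v - n2 e v) :=
      fun e _ => by ring
    rw [Finset.sum_congr rfl this, Finset.sum_add_distrib, hnet1 v, hnet2 v]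
  · intro e; rw [Finset.sum_add_distrib, hpm1 e, hpm2 e]
  · intro e; rw [Finset.sum_add_distrib, hnm1 e, hnm2 e]

lemma massSet_smul (edge : E → Finset V) {s1 : V → ℝ} {μ1 : E → ℝ} (a : ℝ) (ha : 0 ≤ a)
    (h1 : μ1 ∈ MassSet edge s1) :
    (fun e => a * μ1 e) ∈ MassSet edge (fun v => a * s1 v) := by
  obtain ⟨h10, p1, n1, hp1, hn1, hnet1, hpm1, hnm1⟩ := h1
  refine ⟨fun e => mul_nonneg ha (h10 e),
    fun e v => a * p1 e v, fun e v => a * n1 e v,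
    fun e v hv => mul_nonneg ha (hp1 e v hv),
    fun e v hv => mul_nonneg ha (hn1 e v hv), ?_, ?_, ?_⟩
  · intro v
    have : ∀ e ∈ univ.filter (fun e => v ∈ edge e),
        a * p1 e v - a * n1 e v = a * (p1 e v - n1 e v) := fun e _ => by ring
    rw [Finset.sum_congr rfl this, ← Finset.mul_sum, hnet1 v]
  · intro e; rw [← Finset.mul_sum, hpm1 e]
  · intro e; rw [← Finset.mul_sum, hnm1 e]

/-- A unit flow through one edge. -/
lemma massSet_edge (edge : E → Finset V) (e : E) {x v : V}
    (hx : x ∈ edge e) (hv : v ∈ edge e) :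
    (fun e' => if e' = e then (1:ℝ) else 0) ∈
      MassSet edge (fun u => (if u = x then (1:ℝ) else 0) - if u = v then 1 else 0) := by
  have key : ∀ (u y : V), (∑ e' ∈ univ.filter (fun e' => u ∈ edge e'),
      (if e' = e ∧ u = y then (1:ℝ) else 0)) = if u ∈ edge e ∧ u = y then 1 else 0 := by
    intro u y
    by_cases huy : u = y
    · subst huy
      simp only [and_true]
      rw [Finset.sum_ite_eq' (univ.filter (fun e' => u ∈ edge e')) e (fun _ => (1:ℝ))]
      simp
    · simp [huy]
  have marg : ∀ (y : V), y ∈ edge e → ∀ e', (∑ u ∈ edge e',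
      (if e' = e ∧ u = y then (1:ℝ) else 0)) = if e' = e then 1 else 0 := by
    intro y hy e'
    by_cases he : e' = e
    · subst he
      simp only [true_and, if_true]
      rw [Finset.sum_ite_eq' (edge e') y (fun _ => (1:ℝ))]
      simp [hy]
    · simp [he]
  refine ⟨fun e' => by positivity,
    fun e' u => if e' = e ∧ u = x then 1 else 0,
    fun e' u => if e' = e ∧ u = v then 1 else 0,
    fun e' u _ => by positivity, fun e' u _ => by positivity, ?_, ?_, ?_⟩
  · intro u
    rw [Finset.sum_sub_distrib, key u x, key u v]
    have h1 : (if u ∈ edge e ∧ u = x then (1:ℝ) else 0) = if u = x then 1 else 0 := by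
      split_ifs with h h2 h3 <;> first | rfl | (exfalso; first | exact h2 h.2 | exact h (⟨h3 ▸ hx, h3⟩))
    have h2 : (if u ∈ edge e ∧ u = v then (1:ℝ) else 0) = if u = v then 1 else 0 := by
      split_ifs with h h2 h3 <;> first | rfl | (exfalso; first | exact h2 h.2 | exact h (⟨h3 ▸ hv, h3⟩))
    rw [h1, h2]
  · exact fun e' => marg x hx e'
  · exact fun e' => marg v hv e'


lemma massSet_sum (edge : E → Finset V) {ι : Type*} [DecidableEq ι] (A : Finset ι)
    (f : ι → E → ℝ) (g : ι → V → ℝ) (h : ∀ i ∈ A, f i ∈ MassSet edge (g i)) :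
    (fun e => ∑ i ∈ A, f i e) ∈ MassSet edge (fun v => ∑ i ∈ A, g i v) := by
  induction A using Finset.cons_induction with
  | empty => simpa using massSet_zero edge
  | cons a A ha ih =>
    have h1 := massSet_add edge (h a (Finset.mem_cons_self a A))
      (ih (fun i hi => h i (Finset.mem_cons_of_mem hi)))
    have e1 : (fun e => ∑ i ∈ Finset.cons a A ha, f i e)
        = (fun e => f a e + ∑ i ∈ A, f i e) := funext fun e => Finset.sum_cons ha
    have e2 : (fun v => ∑ i ∈ Finset.cons a A ha, g i v)
        = (fun v => g a v + ∑ i ∈ A, g i v) := funext fun v => Finset.sum_cons ha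
    rw [e1, e2]
    exact h1

lemma massSet_path_aux (edge : E → Finset V) :
    ∀ (k : ℕ) (p : Fin (k+1) → V) (c : Fin k → E),
    (∀ i : Fin k, p i.castSucc ∈ edge (c i) ∧ p i.succ ∈ edge (c i)) →
    ∃ ν : E → ℝ, ν ∈ MassSet edge
      (fun t => (if t = p 0 then (1:ℝ) else 0) - if t = p (Fin.last k) then 1 else 0) := by
  intro k
  induction k with
  | zero =>
    intro p c _
    refine ⟨fun _ => 0, ?_⟩
    have : (Fin.last 0) = (0 : Fin 1) := rfl
    rw [this]
    have := massSet_zero edge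
    rw [massSet_congr edge (s1 := fun _ => (0:ℝ)) (s2 := fun t => (if t = p 0 then (1:ℝ) else 0) - if t = p 0 then 1 else 0)] at this
    · exact this
    · intro v; simp
  | succ k ih =>
    intro p c h
    obtain ⟨ν1, h1⟩ := ih (fun i => p i.castSucc) (fun i => c i.castSucc) (fun i => by
      constructor
      · exact (h i.castSucc).1
      · have : (i.succ).castSucc = (i.castSucc).succ := by
          rw [Fin.succ_castSucc]
        simp only [this]
        exact (h i.castSucc).2)
    have hedge := massSet_edge edge (c (Fin.last k))
      (hx := (h (Fin.last k)).1) (hv := (h (Fin.last k)).2)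
    have hadd := massSet_add edge h1 hedge
    rw [massSet_congr edge
      (s2 := fun t => (if t = p 0 then (1:ℝ) else 0) - if t = p (Fin.last (k+1)) then 1 else 0)] at hadd
    · exact ⟨_, hadd⟩
    · intro t
      have e1 : (fun i => p (Fin.castSucc i)) 0 = p 0 := by
        simp only []
        congr 1
      have e2 : (Fin.last k).succ = Fin.last (k+1) := by
        rw [Fin.succ_last]
      simp only [e1]
      rw [e2]
      ring

lemma massSet_route (edge : E → Finset V) (hconn : HConn edge) :
    ∃ Φ : (V → ℝ) → (E → ℝ),
      (∀ t : V → ℝ, ∑ v, t v = 0 → Φ t ∈ MassSet edge t) ∧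
      (∀ e, Continuous fun t : V → ℝ => Φ t e) ∧ (∀ e, Φ (fun _ => 0) e = 0) := by
  obtain ⟨v0⟩ := (inferInstance : Nonempty V)
  have hch : ∀ u v : V, ∃ ν : E → ℝ, ν ∈ MassSet edge
      (fun t => (if t = u then (1:ℝ) else 0) - if t = v then 1 else 0) := by
    intro u v
    obtain ⟨k, p, c, hp0, hpl, hpc⟩ := hconn u v
    obtain ⟨ν, hν⟩ := massSet_path_aux edge k p c hpc
    rw [hp0, hpl] at hν
    exact ⟨ν, hν⟩
  choose νp hνp using fun u => hch u v0
  choose νm hνm using fun u => hch v0 u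
  refine ⟨fun t e => ∑ u, (max (t u) 0 * νp u e + max (-(t u)) 0 * νm u e), ?_, ?_, ?_⟩
  · intro t ht
    have hmem := massSet_sum edge Finset.univ
      (fun u => fun e => max (t u) 0 * νp u e + max (-(t u)) 0 * νm u e)
      (fun u => fun v => max (t u) 0 * ((if v = u then (1:ℝ) else 0) - if v = v0 then 1 else 0)
        + max (-(t u)) 0 * ((if v = v0 then (1:ℝ) else 0) - if v = u then 1 else 0))
      (fun u _ => massSet_add edge
        (massSet_smul edge (max (t u) 0) (le_max_right _ _) (hνp u))
        (massSet_smul edge (max (-(t u)) 0) (le_max_right _ _) (hνm u)))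
    rw [massSet_congr edge (s2 := t)] at hmem
    · exact hmem
    · intro v
      have hterm : ∀ u, max (t u) 0 * ((if v = u then (1:ℝ) else 0) - if v = v0 then 1 else 0)
          + max (-(t u)) 0 * ((if v = v0 then (1:ℝ) else 0) - if v = u then 1 else 0)
          = t u * (if v = u then (1:ℝ) else 0) - t u * (if v = v0 then 1 else 0) := by
        intro u
        have h4 : max (t u) 0 - max (-(t u)) 0 = t u := max_zero_sub_max_neg_zero_eq_self (t u)
        linear_combination ((if v = u then (1:ℝ) else 0) - if v = v0 then 1 else 0) * h4
      rw [Finset.sum_congr rfl (fun u _ => hterm u), Finset.sum_sub_distrib]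
      have hA : ∑ u, t u * (if v = u then (1:ℝ) else 0) = t v := by
        simp [mul_ite]
      have hB : ∑ u, t u * (if v = v0 then (1:ℝ) else 0) = 0 := by
        rw [← Finset.sum_mul, ht, zero_mul]
      rw [hA, hB, sub_zero]
  · intro e
    apply continuous_finset_sum
    intro u _
    exact ((((continuous_apply u).max continuous_const).mul continuous_const).add
      ((((continuous_apply u).neg).max continuous_const).mul continuous_const))
  · intro e; simp


-- ## Cone machinery for LP strong duality

noncomputable def posCone (κ : Type*) [Fintype κ] : ProperCone ℝ (EuclideanSpace ℝ κ) where
  toSubmodule :=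
    { carrier := {z | ∀ j, 0 ≤ z j}
      add_mem' := fun {a b} ha hb j => by
        have : (a + b) j = a j + b j := rfl
        rw [this]; exact add_nonneg (ha j) (hb j)
      zero_mem' := fun j => le_refl 0
      smul_mem' := fun c {x} hx j => by
        have : (c • x) j = (c : ℝ) * x j := rfl
        rw [this]; exact mul_nonneg c.2 (hx j) }
  isClosed' := by
    show IsClosed {z : EuclideanSpace ℝ κ | ∀ j, 0 ≤ z j}
    have : {z : EuclideanSpace ℝ κ | ∀ j, 0 ≤ z j} = ⋂ j, {z : EuclideanSpace ℝ κ | 0 ≤ z j} := by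
      ext z; simp
    rw [this]
    apply isClosed_iInter
    intro j
    have hc : Continuous (fun z : EuclideanSpace ℝ κ => z j) :=
      (continuous_apply j).comp (PiLp.continuous_ofLp (p := 2) (β := fun _ : κ => ℝ))
    exact isClosed_le continuous_const hc

lemma mem_posCone {κ : Type*} [Fintype κ] (z : EuclideanSpace ℝ κ) :
    z ∈ posCone κ ↔ ∀ j, 0 ≤ z j := Iff.rfl

/-- The index of pair constraints. -/
def PairIdx (edge : E → Finset V) : Type _ := Σ e : E, ({v // v ∈ edge e} × {v // v ∈ edge e})

noncomputable instance (edge : E → Finset V) : Fintype (PairIdx edge) := by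
  unfold PairIdx; classical infer_instance

noncomputable def dualMap (edge : E → Finset V) (r : E → ℝ) :
    EuclideanSpace ℝ (PairIdx edge ⊕ Unit) →L[ℝ] EuclideanSpace ℝ (V ⊕ Unit) :=
  LinearMap.toContinuousLinearMap
  { toFun := fun z => WithLp.toLp 2 (Sum.elim
      (fun v => ∑ i : PairIdx edge,
        ((if v = i.2.1.1 then (1:ℝ) else 0) - (if v = i.2.2.1 then 1 else 0)) * z (Sum.inl i))
      (fun _ => (∑ i : PairIdx edge, r i.1 * z (Sum.inl i)) + z (Sum.inr ())) :
        (V ⊕ Unit) → ℝ)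
    map_add' := by
      intro a b
      apply PiLp.ext
      intro j
      cases j with
      | inl v =>
        show ∑ i : PairIdx edge,
            ((if v = i.2.1.1 then (1:ℝ) else 0) - (if v = i.2.2.1 then 1 else 0))
              * (a (Sum.inl i) + b (Sum.inl i))
          = (∑ i : PairIdx edge,
              ((if v = i.2.1.1 then (1:ℝ) else 0) - (if v = i.2.2.1 then 1 else 0)) * a (Sum.inl i))
            + ∑ i : PairIdx edge,
              ((if v = i.2.1.1 then (1:ℝ) else 0) - (if v = i.2.2.1 then 1 else 0)) * b (Sum.inl i)
        rw [← Finset.sum_add_distrib]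
        exact Finset.sum_congr rfl (fun i _ => by ring)
      | inr u =>
        show (∑ i : PairIdx edge, r i.1 * (a (Sum.inl i) + b (Sum.inl i)))
            + (a (Sum.inr ()) + b (Sum.inr ()))
          = ((∑ i : PairIdx edge, r i.1 * a (Sum.inl i)) + a (Sum.inr ()))
            + ((∑ i : PairIdx edge, r i.1 * b (Sum.inl i)) + b (Sum.inr ()))
        have h1 : ∑ i : PairIdx edge, r i.1 * (a (Sum.inl i) + b (Sum.inl i))
            = (∑ i : PairIdx edge, r i.1 * a (Sum.inl i))
              + ∑ i : PairIdx edge, r i.1 * b (Sum.inl i) := by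
          rw [← Finset.sum_add_distrib]
          exact Finset.sum_congr rfl (fun i _ => by ring)
        rw [h1]; ring
    map_smul' := by
      intro m a
      apply PiLp.ext
      intro j
      cases j with
      | inl v =>
        show ∑ i : PairIdx edge,
            ((if v = i.2.1.1 then (1:ℝ) else 0) - (if v = i.2.2.1 then 1 else 0))
              * (m * a (Sum.inl i))
          = m * ∑ i : PairIdx edge,
              ((if v = i.2.1.1 then (1:ℝ) else 0) - (if v = i.2.2.1 then 1 else 0)) * a (Sum.inl i)
        rw [Finset.mul_sum]
        exact Finset.sum_congr rfl (fun i _ => by ring)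
      | inr u =>
        show (∑ i : PairIdx edge, r i.1 * (m * a (Sum.inl i))) + m * a (Sum.inr ())
          = m * ((∑ i : PairIdx edge, r i.1 * a (Sum.inl i)) + a (Sum.inr ()))
        have h1 : ∑ i : PairIdx edge, r i.1 * (m * a (Sum.inl i))
            = m * ∑ i : PairIdx edge, r i.1 * a (Sum.inl i) := by
          rw [Finset.mul_sum]
          exact Finset.sum_congr rfl (fun i _ => by ring)
        rw [h1]; ring }


lemma ite_nonneg' {P : Prop} [Decidable P] {a : ℝ} (ha : 0 ≤ a) : 0 ≤ if P then a else 0 := by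
  split
  · exact ha
  · exact le_rfl

lemma extract_net (edge : E → Finset V) (y : PairIdx edge → ℝ)
    (g : PairIdx edge → V) (hg : ∀ i, g i ∈ edge i.1) (v' : V) :
    ∑ e ∈ univ.filter (fun e => v' ∈ edge e),
      (∑ i : PairIdx edge, if i.1 = e ∧ g i = v' then y i else 0)
    = ∑ i : PairIdx edge, (if v' = g i then (1:ℝ) else 0) * y i := by
  rw [Finset.sum_comm]
  apply Finset.sum_congr rfl
  intro i _
  by_cases hP : g i = v'
  · simp only [hP, and_true]
    rw [Finset.sum_ite_eq (univ.filter (fun e => v' ∈ edge e)) i.1 (fun _ => y i)]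
    have : v' ∈ edge i.1 := hP ▸ hg i
    simp [this, hP]
  · simp only [hP, and_false, if_false]
    rw [Finset.sum_const_zero, if_neg (fun h => hP h.symm), zero_mul]

lemma extract_marg (edge : E → Finset V) (y : PairIdx edge → ℝ)
    (g : PairIdx edge → V) (hg : ∀ i, g i ∈ edge i.1) (e : E) :
    ∑ u ∈ edge e, (∑ i : PairIdx edge, if i.1 = e ∧ g i = u then y i else 0)
    = ∑ i : PairIdx edge, if i.1 = e then y i else 0 := by
  rw [Finset.sum_comm]
  apply Finset.sum_congr rfl
  intro i _
  by_cases hE : i.1 = e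
  · simp only [hE, true_and]
    rw [Finset.sum_ite_eq (edge e) (g i) (fun _ => y i)]
    have : g i ∈ edge e := hE ▸ hg i
    simp [this]
  · simp [hE]

lemma extract_mass (edge : E → Finset V) (y : PairIdx edge → ℝ) (hy : ∀ i, 0 ≤ y i) :
    (fun e => ∑ i : PairIdx edge, if i.1 = e then y i else 0) ∈ MassSet edge
      (fun v => ∑ i : PairIdx edge,
        ((if v = i.2.1.1 then (1:ℝ) else 0) - (if v = i.2.2.1 then 1 else 0)) * y i) := by
  refine ⟨fun e => Finset.sum_nonneg fun i _ => ite_nonneg' (hy i),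
    fun e u => ∑ i : PairIdx edge, if i.1 = e ∧ i.2.1.1 = u then y i else 0,
    fun e u => ∑ i : PairIdx edge, if i.1 = e ∧ i.2.2.1 = u then y i else 0,
    fun e u _ => Finset.sum_nonneg fun i _ => ite_nonneg' (hy i),
    fun e u _ => Finset.sum_nonneg fun i _ => ite_nonneg' (hy i), ?_, ?_, ?_⟩
  · intro v'
    rw [Finset.sum_sub_distrib,
      extract_net edge y (fun i => i.2.1.1) (fun i => i.2.1.2) v',
      extract_net edge y (fun i => i.2.2.1) (fun i => i.2.2.2) v',
      ← Finset.sum_sub_distrib]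
    exact Finset.sum_congr rfl (fun i _ => by ring)
  · intro e
    exact extract_marg edge y (fun i => i.2.1.1) (fun i => i.2.1.2) e
  · intro e
    exact extract_marg edge y (fun i => i.2.2.1) (fun i => i.2.2.2) e



lemma euclid_inner {κ : Type*} [Fintype κ] (a b : EuclideanSpace ℝ κ) :
    ⟪a, b⟫ = ∑ j, a j * b j := by
  rw [PiLp.inner_apply]
  exact Finset.sum_congr rfl (fun j _ => by simp [RCLike.inner_apply, mul_comm])

lemma const_on_edges (edge : E → Finset V) (hconn : HConn edge) (x : V → ℝ)
    (h : ∀ e, ∀ u ∈ edge e, ∀ v ∈ edge e, x u = x v) : ∀ u v : V, x u = x v := by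
  intro u v
  obtain ⟨k, p, c, hp0, hpl, hpc⟩ := hconn u v
  have key : ∀ i : Fin (k+1), x (p i) = x (p 0) := by
    intro i
    induction i using Fin.induction with
    | zero => rfl
    | succ i ih =>
      have := h (c i) _ (hpc i).2 _ (hpc i).1
      rw [this, ih]
  rw [← hp0, ← hpl, key (Fin.last k)]

lemma dualMap_apply_inl (edge : E → Finset V) (r : E → ℝ)
    (z : EuclideanSpace ℝ (PairIdx edge ⊕ Unit)) (v : V) :
    (dualMap edge r) z (Sum.inl v) = ∑ i : PairIdx edge,
      ((if v = i.2.1.1 then (1:ℝ) else 0) - (if v = i.2.2.1 then 1 else 0)) * z (Sum.inl i) :=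
  rfl

lemma dualMap_apply_inr (edge : E → Finset V) (r : E → ℝ)
    (z : EuclideanSpace ℝ (PairIdx edge ⊕ Unit)) (u : Unit) :
    (dualMap edge r) z (Sum.inr u) = (∑ i : PairIdx edge, r i.1 * z (Sum.inl i)) + z (Sum.inr ()) :=
  rfl

lemma sum_coeff (a b : V) (x : V → ℝ) :
    ∑ v, ((if v = a then (1:ℝ) else 0) - (if v = b then 1 else 0)) * x v = x a - x b := by
  have h : ∀ v, ((if v = a then (1:ℝ) else 0) - (if v = b then 1 else 0)) * x v
      = (if v = a then x v else 0) - (if v = b then x v else 0) := fun v => by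
    split_ifs <;> ring
  rw [Finset.sum_congr rfl (fun v _ => h v), Finset.sum_sub_distrib,
    Finset.sum_ite_eq' univ a x, Finset.sum_ite_eq' univ b x]
  simp

lemma strong_duality (edge : E → Finset V) (hne : ∀ e, (edge e).Nonempty)
    (w : E → ℝ) (hw : ∀ e, 0 < w e) (s : V → ℝ) (hconn : HConn edge)
    (hs : ∑ v, s v = 0) (r : E → ℝ) (hr : ∀ e, 0 ≤ r e)
    (μbar : E → ℝ) (hbar : μbar ∈ MassSet edge s)
    (hbarmin : ∀ ν ∈ MassSet edge s, ∑ e, r e * μbar e ≤ ∑ e, r e * ν e) :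
    suppVal edge hne w s r = ∑ e, r e * μbar e := by
  classical
  set S := {c : ℝ | ∃ x : V → ℝ, memX0 edge w x ∧
    (∀ e, eRange edge hne x e ≤ r e) ∧ c = ∑ v, s v * x v} with hSdef
  set β := ∑ e, r e * μbar e with hβ
  have hS0 : (0:ℝ) ∈ S := by
    refine ⟨fun _ => 0, ?_, ?_, ?_⟩
    · unfold memX0; simp
    · intro e; rw [eRange_zero]; exact hr e
    · simp
  have hSub : ∀ c ∈ S, c ≤ β := by
    rintro c ⟨x, hx0, hxf, rfl⟩
    calc ∑ v, s v * x v ≤ ∑ e, μbar e * eRange edge hne x e :=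
          weak_duality edge hne s x μbar hbar
      _ ≤ ∑ e, r e * μbar e := by
          apply Finset.sum_le_sum
          intro e _
          rw [mul_comm (r e)]
          exact mul_le_mul_of_nonneg_left (hxf e) (hbar.1 e)
  have hBdd : BddAbove S := ⟨β, hSub⟩
  have hle : suppVal edge hne w s r ≤ β := csSup_le ⟨0, hS0⟩ hSub
  set σ := suppVal edge hne w s r with hσ
  have hσ0 : 0 ≤ σ := le_csSup hBdd hS0
  -- the separation step
  set bvec : EuclideanSpace ℝ (V ⊕ Unit) := WithLp.toLp 2 (Sum.elim s (fun _ => σ) : (V ⊕ Unit) → ℝ)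
    with hbvec
  have key : bvec ∈ (posCone (PairIdx edge ⊕ Unit)).map (dualMap edge r) := by
    rw [ProperCone.relative_hyperplane_separation]
    intro yv hyv
    set x : V → ℝ := fun v => yv (Sum.inl v) with hx
    set lam : ℝ := yv (Sum.inr ()) with hlam
    rw [ProperCone.mem_innerDual] at hyv
    have hrow : ∀ j : PairIdx edge ⊕ Unit,
        0 ≤ ⟪(dualMap edge r) (EuclideanSpace.single j 1), yv⟫ := by
      intro j
      have hmem : EuclideanSpace.single j (1:ℝ) ∈ posCone (PairIdx edge ⊕ Unit) := by
        intro j'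
        rw [EuclideanSpace.single_apply]
        exact ite_nonneg' zero_le_one
      have := hyv hmem
      rwa [ContinuousLinearMap.adjoint_inner_right] at this
    have hineq : ∀ i : PairIdx edge, 0 ≤ (x i.2.1.1 - x i.2.2.1) + r i.1 * lam := by
      intro i
      have h1 := hrow (Sum.inl i)
      rw [euclid_inner, Fintype.sum_sum_type] at h1
      have e1 : ∀ v : V, (dualMap edge r) (EuclideanSpace.single (Sum.inl i) 1) (Sum.inl v)
          = (if v = i.2.1.1 then (1:ℝ) else 0) - (if v = i.2.2.1 then 1 else 0) := by
        intro v
        rw [dualMap_apply_inl, Finset.sum_eq_single i]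
        · rw [EuclideanSpace.single_apply,
            if_pos (show (Sum.inl i : PairIdx edge ⊕ Unit) = Sum.inl i from rfl), mul_one]
        · intro i' _ hne'
          rw [EuclideanSpace.single_apply,
            if_neg (show ¬((Sum.inl i' : PairIdx edge ⊕ Unit) = Sum.inl i) by
              simpa using hne'), mul_zero]
        · intro h; exact absurd (Finset.mem_univ i) h
      have e2 : (dualMap edge r) (EuclideanSpace.single (Sum.inl i) 1) (Sum.inr ()) = r i.1 := by
        rw [dualMap_apply_inr, Finset.sum_eq_single i]
        · rw [EuclideanSpace.single_apply,
            if_pos (show (Sum.inl i : PairIdx edge ⊕ Unit) = Sum.inl i from rfl), mul_one,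
            EuclideanSpace.single_apply,
            if_neg (show ¬((Sum.inr () : PairIdx edge ⊕ Unit) = Sum.inl i) by simp), add_zero]
        · intro i' _ hne'
          rw [EuclideanSpace.single_apply,
            if_neg (show ¬((Sum.inl i' : PairIdx edge ⊕ Unit) = Sum.inl i) by
              simpa using hne'), mul_zero]
        · intro h; exact absurd (Finset.mem_univ i) h
      simp only [e1, e2] at h1
      rw [sum_coeff] at h1
      simpa using h1
    have hlam0 : 0 ≤ lam := by
      have h1 := hrow (Sum.inr ())
      rw [euclid_inner, Fintype.sum_sum_type] at h1
      have e1 : ∀ v : V, (dualMap edge r) (EuclideanSpace.single (Sum.inr ()) 1) (Sum.inl v)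
          = 0 := by
        intro v
        rw [dualMap_apply_inl]
        apply Finset.sum_eq_zero
        intro i' _
        rw [EuclideanSpace.single_apply,
          if_neg (show ¬((Sum.inl i' : PairIdx edge ⊕ Unit) = Sum.inr ()) by simp), mul_zero]
      have e2 : (dualMap edge r) (EuclideanSpace.single (Sum.inr ()) (1:ℝ)) (Sum.inr ()) = 1 := by
        rw [dualMap_apply_inr]
        rw [Finset.sum_eq_zero (fun i' _ => by
          rw [EuclideanSpace.single_apply,
            if_neg (show ¬((Sum.inl i' : PairIdx edge ⊕ Unit) = Sum.inr ()) by simp), mul_zero])]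
        rw [EuclideanSpace.single_apply,
          if_pos (show (Sum.inr () : PairIdx edge ⊕ Unit) = Sum.inr () from rfl), zero_add]
      simp only [e1, e2] at h1
      simpa using h1
    have hgoal : ⟪yv, bvec⟫ = (∑ v, x v * s v) + lam * σ := by
      rw [euclid_inner, Fintype.sum_sum_type]
      have e1 : ∀ v : V, bvec (Sum.inl v) = s v := fun v => rfl
      have e2 : bvec (Sum.inr ()) = σ := rfl
      simp only [e1, e2]
      simp
      rfl
    rw [real_inner_comm, hgoal]
    by_cases hl : lam = 0
    · have hc : ∀ e, ∀ u ∈ edge e, ∀ v ∈ edge e, x u = x v := by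
        intro e u hu v hv
        have h1 := hineq ⟨e, ⟨u, hu⟩, ⟨v, hv⟩⟩
        have h2 := hineq ⟨e, ⟨v, hv⟩, ⟨u, hu⟩⟩
        simp only [hl, mul_zero, add_zero] at h1 h2
        linarith
      obtain ⟨u0⟩ := (inferInstance : Nonempty V)
      have hxc : ∀ v, x v = x u0 := fun v => const_on_edges edge hconn x hc v u0
      have : ∑ v, x v * s v = x u0 * ∑ v, s v := by
        rw [Finset.mul_sum]
        exact Finset.sum_congr rfl (fun v _ => by rw [hxc v])
      simp [this, hs, hl]
    · have hlam' : 0 < lam := lt_of_le_of_ne hlam0 (Ne.symm hl)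
      set z : V → ℝ := fun v => -(x v) / lam with hz
      have hfeas : ∀ e, eRange edge hne z e ≤ r e := by
        intro e
        rw [eRange_le_iff]
        intro u hu v hv
        have h1 := hineq ⟨e, ⟨u, hu⟩, ⟨v, hv⟩⟩
        show -x u / lam - -x v / lam ≤ r e
        rw [div_sub_div_same, div_le_iff₀ hlam']
        dsimp only at h1
        linarith
      obtain ⟨x', hx'0, hx'f, hx'v⟩ := shift_to_X0 edge hne w hw s hs z
      have hmem : (∑ v, s v * x' v) ∈ S :=
        ⟨x', hx'0, fun e => hx'f e (r e) (hfeas e), rfl⟩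
      have hzle : ∑ v, s v * z v ≤ σ := by
        rw [← hx'v]
        exact le_csSup hBdd hmem
      have hzval : ∑ v, s v * z v = -(∑ v, x v * s v) / lam := by
        rw [div_eq_mul_inv, ← Finset.sum_neg_distrib, Finset.sum_mul]
        apply Finset.sum_congr rfl
        intro v _
        simp only [hz]
        rw [div_eq_mul_inv]
        ring
      rw [hzval] at hzle
      rw [div_le_iff₀ hlam'] at hzle
      nlinarith
  -- extract the sequence
  rw [ProperCone.mem_map, PointedCone.mem_closure, mem_closure_iff_seq_limit] at key
  obtain ⟨seq, hseqmem, hseqlim⟩ := key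
  have hz : ∀ n, ∃ z : EuclideanSpace ℝ (PairIdx edge ⊕ Unit),
      (∀ j, 0 ≤ z j) ∧ (dualMap edge r) z = seq n := by
    intro n
    have h1 := hseqmem n
    rw [SetLike.mem_coe, PointedCone.mem_map] at h1
    obtain ⟨z, hz1, hz2⟩ := h1
    exact ⟨z, hz1, hz2⟩
  choose zf hz0 hzeq using hz
  set yn : ℕ → PairIdx edge → ℝ := fun n i => zf n (Sum.inl i) with hyn
  have hyn0 : ∀ n i, 0 ≤ yn n i := fun n i => hz0 n _
  set νn : ℕ → E → ℝ := fun n e => ∑ i : PairIdx edge, if i.1 = e then yn n i else 0 with hνndef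
  set sn : ℕ → V → ℝ := fun n v => ∑ i : PairIdx edge,
    ((if v = i.2.1.1 then (1:ℝ) else 0) - (if v = i.2.2.1 then 1 else 0)) * yn n i with hsndef
  have hνn : ∀ n, νn n ∈ MassSet edge (sn n) := fun n => extract_mass edge (yn n) (hyn0 n)
  have hsn_seq : ∀ n v, sn n v = seq n (Sum.inl v) := by
    intro n v
    rw [← hzeq n]
    rfl
  have hsn_sum : ∀ n, ∑ v, sn n v = 0 := by
    intro n
    rw [hsndef]
    dsimp only
    rw [Finset.sum_comm]
    apply Finset.sum_eq_zero
    intro i _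
    rw [sum_coeff (i.2.1.1 : V) (i.2.2.1 : V) (fun _ => yn n i)]
    simp
  have hcost : ∀ n, ∑ e, r e * νn n e ≤ seq n (Sum.inr ()) := by
    intro n
    have h1 : ∑ e, r e * νn n e = ∑ i : PairIdx edge, r i.1 * yn n i := by
      have h2 : ∀ e, r e * νn n e = ∑ i : PairIdx edge, if i.1 = e then r e * yn n i else 0 := by
        intro e
        rw [hνndef]
        dsimp only
        rw [Finset.mul_sum]
        exact Finset.sum_congr rfl (fun i _ => by rw [mul_ite, mul_zero])
      rw [Finset.sum_congr rfl (fun e _ => h2 e), Finset.sum_comm]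
      apply Finset.sum_congr rfl
      intro i _
      rw [Finset.sum_ite_eq univ i.1 (fun e => r e * yn n i)]
      simp
    rw [h1, ← hzeq n]
    have h3 : (dualMap edge r) (zf n) (Sum.inr ())
        = (∑ i : PairIdx edge, r i.1 * zf n (Sum.inl i)) + zf n (Sum.inr ()) := rfl
    rw [h3]
    have h4 := hz0 n (Sum.inr ())
    simp only [hyn]
    linarith
  obtain ⟨Φ, hΦmem, hΦcont, hΦ0⟩ := massSet_route edge hconn
  have hκ : ∀ n, (fun e => νn n e + Φ (fun v => s v - sn n v) e) ∈ MassSet edge s := by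
    intro n
    have hts : ∑ v, (s v - sn n v) = 0 := by
      rw [Finset.sum_sub_distrib, hs, hsn_sum n]; ring
    have h2 := massSet_add edge (hνn n) (hΦmem _ hts)
    rw [massSet_congr edge (s2 := s)] at h2
    · exact h2
    · intro v; ring
  have hβn : ∀ n, β ≤ seq n (Sum.inr ()) + ∑ e, r e * Φ (fun v => s v - sn n v) e := by
    intro n
    have h3 := hbarmin _ (hκ n)
    have h4 : ∑ e, r e * (νn n e + Φ (fun v => s v - sn n v) e)
        = (∑ e, r e * νn n e) + ∑ e, r e * Φ (fun v => s v - sn n v) e := by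
      rw [← Finset.sum_add_distrib]
      exact Finset.sum_congr rfl (fun e _ => by ring)
    rw [h4] at h3
    have := hcost n
    linarith
  have hproj : ∀ j, Filter.Tendsto (fun n => seq n j) Filter.atTop (nhds (bvec j)) := by
    intro j
    have hc : Continuous (fun zz : EuclideanSpace ℝ (V ⊕ Unit) => zz j) :=
      (continuous_apply j).comp (PiLp.continuous_ofLp (p := 2) (β := fun _ : V ⊕ Unit => ℝ))
    exact (hc.tendsto bvec).comp hseqlim
  have hcostlim : Filter.Tendsto
      (fun n => seq n (Sum.inr ()) + ∑ e, r e * Φ (fun v => s v - sn n v) e)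
      Filter.atTop (nhds (σ + 0)) := by
    apply Filter.Tendsto.add
    · exact hproj (Sum.inr ())
    · have hcont : Continuous (fun t : V → ℝ => ∑ e, r e * Φ t e) :=
        continuous_finset_sum _ (fun e _ => continuous_const.mul (hΦcont e))
      have htend : Filter.Tendsto (fun n => (fun v => s v - sn n v))
          Filter.atTop (nhds (fun _ => (0:ℝ))) := by
        rw [tendsto_pi_nhds]
        intro v
        have h5 : Filter.Tendsto (fun n => sn n v) Filter.atTop (nhds (s v)) := by
          have h6 := hproj (Sum.inl v)
          have h7 : (fun n => sn n v) = fun n => seq n (Sum.inl v) := funext (fun n => hsn_seq n v)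
          rw [h7]
          exact h6
        have h8 := Filter.Tendsto.sub (tendsto_const_nhds (x := s v)) h5
        simpa using h8
      have h9 := (hcont.tendsto (fun _ => (0:ℝ))).comp htend
      have h10 : ∑ e, r e * Φ (fun _ => (0:ℝ)) e = 0 := by
        apply Finset.sum_eq_zero
        intro e _
        rw [hΦ0 e, mul_zero]
      rw [h10] at h9
      exact h9
  have hfin : β ≤ σ + 0 := ge_of_tendsto' hcostlim hβn
  have : β ≤ σ := by linarith
  linarith [hle, this]



/-- First-order optimality of the minimizer of `q` over `𝓜(s)`. -/
lemma qObj_first_order (edge : E → Finset V) (w : E → ℝ) (hw : ∀ e, 0 < w e) (s : V → ℝ)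
    (μstar : E → ℝ) (hstar : μstar ∈ MassSet edge s)
    (hmin : ∀ ν ∈ MassSet edge s, qObj w μstar ≤ qObj w ν)
    (ν : E → ℝ) (hν : ν ∈ MassSet edge s) :
    0 ≤ ∑ e, (μstar e / w e) * (ν e - μstar e) := by
  set A := ∑ e, (μstar e / w e) * (ν e - μstar e) with hA
  set B := ∑ e, (ν e - μstar e) ^ 2 / w e with hB
  have hB0 : 0 ≤ B := Finset.sum_nonneg fun e _ => div_nonneg (sq_nonneg _) (hw e).le
  have hmem : ∀ t : ℝ, 0 ≤ t → t ≤ 1 →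
      (fun e => (1 - t) * μstar e + t * ν e) ∈ MassSet edge s := by
    intro t ht0 ht1
    have h1 := massSet_add edge (massSet_smul edge (1 - t) (by linarith) hstar)
      (massSet_smul edge t ht0 hν)
    rw [massSet_congr edge (s2 := s)] at h1
    · exact h1
    · intro v; ring
  have hexp : ∀ t : ℝ, qObj w (fun e => (1 - t) * μstar e + t * ν e) - qObj w μstar
      = t * A + t ^ 2 / 2 * B := by
    intro t
    unfold qObj
    rw [hA, hB, Finset.mul_sum, Finset.mul_sum, Finset.mul_sum, Finset.mul_sum,
      ← Finset.sum_sub_distrib, ← Finset.sum_add_distrib]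
    apply Finset.sum_congr rfl
    intro e _
    have hwne : w e ≠ 0 := (hw e).ne'
    field_simp
    ring
  have hq : ∀ t : ℝ, 0 ≤ t → t ≤ 1 → 0 ≤ t * A + t ^ 2 / 2 * B := by
    intro t ht0 ht1
    rw [← hexp t]
    have := hmin _ (hmem t ht0 ht1)
    linarith
  by_contra hAneg
  push_neg at hAneg
  rcases eq_or_lt_of_le hB0 with hBz | hBpos
  · have := hq 1 zero_le_one le_rfl
    rw [← hBz] at this
    nlinarith
  · set t := min 1 (-A / B) with htdef
    have htpos : 0 < t := lt_min one_pos (div_pos (neg_pos.mpr hAneg) hBpos)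
    have ht1 : t ≤ 1 := min_le_left _ _
    have htle : t ≤ -A / B := min_le_right _ _
    have := hq t htpos.le ht1
    have h2 : t * B ≤ -A := by
      rw [le_div_iff₀ hBpos] at htle
      linarith
    nlinarith

/-- Energy weak duality: `𝓟(x) ≥ -q(ν)` for any `x` and `ν ∈ 𝓜(s)`. -/
lemma pobj_lower (edge : E → Finset V) (hne : ∀ e, (edge e).Nonempty)
    (w : E → ℝ) (hw : ∀ e, 0 < w e) (s : V → ℝ) (x : V → ℝ)
    (ν : E → ℝ) (hν : ν ∈ MassSet edge s) :
    -qObj w ν ≤ Pobj edge hne w s x := by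
  have hwd := weak_duality edge hne s x ν hν
  have hsum : 0 ≤ ∑ e, ((1/2) * (w e * (eRange edge hne x e)^2)
      - ν e * eRange edge hne x e + ν e ^ 2 / w e / 2) := by
    apply Finset.sum_nonneg
    intro e _
    have h1 := hw e
    have h2 := sq_nonneg (w e * eRange edge hne x e - ν e)
    have key : (0:ℝ) ≤ (w e * eRange edge hne x e - ν e)^2 / (2 * w e) :=
      div_nonneg h2 (by linarith)
    have heq : (w e * eRange edge hne x e - ν e)^2 / (2 * w e)
        = (1/2) * (w e * (eRange edge hne x e)^2) - ν e * eRange edge hne x e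
          + ν e ^ 2 / w e / 2 := by
      field_simp
      ring
    rw [← heq]
    exact key
  have hsplit : ∑ e, ((1/2) * (w e * (eRange edge hne x e)^2)
      - ν e * eRange edge hne x e + ν e ^ 2 / w e / 2)
      = (1/2) * (∑ e, w e * (eRange edge hne x e)^2)
        - (∑ e, ν e * eRange edge hne x e) + (1/2) * ∑ e, ν e ^ 2 / w e := by
    rw [Finset.mul_sum, Finset.mul_sum, ← Finset.sum_sub_distrib, ← Finset.sum_add_distrib]
    exact Finset.sum_congr rfl (fun e _ => by ring)
  rw [hsplit] at hsum
  unfold Pobj energyH qObj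
  linarith


end Aux

theorem stmt13 (edge : E → Finset V) (hne : ∀ e, (edge e).Nonempty)
    (w : E → ℝ) (hw : ∀ e, 0 < w e) (s : V → ℝ)
    (hconn : HConn edge) (hs : ∑ v, s v = 0)
    (μ μstar μbar : E → ℝ)
    (hμ : μ ∈ MassSet edge s)
    (hμstar : μstar ∈ MassSet edge s ∧
      ∀ ν ∈ MassSet edge s, qObj w μstar ≤ qObj w ν)
    (hμbar : μbar ∈ MassSet edge s ∧
      ∀ ν ∈ MassSet edge s,
        ∑ e, (μ e / w e) * μbar e ≤ ∑ e, (μ e / w e) * ν e) :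
    let r : E → ℝ := fun e => μ e / w e
    let δ : ℝ := qObj w μ - qObj w μstar
    let OPT : ℝ := sInf {c : ℝ | ∃ x : V → ℝ, memX0 edge w x ∧ c = Pobj edge hne w s x}
    (0 ≤ 2 * qObj w μ - suppVal edge hne w s r) ∧
    (2 * qObj w μ - suppVal edge hne w s r = ∑ e, r e * (μ e - μbar e)) ∧
    (∑ e, r e * (μ e - μbar e)
      ≤ δ + Real.sqrt (2 * δ) * wInvNorm w (fun e => μ e - μbar e)) ∧
    ∀ xr : V → ℝ, memX0 edge w xr → (∀ e, eRange edge hne xr e ≤ r e) →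
      (∀ y : V → ℝ, memX0 edge w y → (∀ e, eRange edge hne y e ≤ r e) →
        ∑ v, s v * y v ≤ ∑ v, s v * xr v) →
      Pobj edge hne w s xr - OPT
        ≤ Real.sqrt (2 * δ) * wInvNorm w (fun e => μ e - μbar e) := by
  classical
  intro r δ OPT
  obtain ⟨hstar_mem, hstar_min⟩ := hμstar
  obtain ⟨hbar_mem, hbar_min⟩ := hμbar
  have hr : ∀ e, 0 ≤ r e := fun e => div_nonneg (hμ.1 e) (hw e).le
  have hsd : suppVal edge hne w s r = ∑ e, r e * μbar e :=
    strong_duality edge hne w hw s hconn hs r hr μbar hbar_mem hbar_min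
  have h2q : 2 * qObj w μ = ∑ e, r e * μ e := by
    have h1 : ∀ e, r e * μ e = μ e ^ 2 / w e := fun e => by
      show (μ e / w e) * μ e = _
      ring
    rw [Finset.sum_congr rfl (fun e _ => h1 e)]
    unfold qObj
    ring
  have hδval : δ = qObj w μ - qObj w μstar := rfl
  have hδ0 : 0 ≤ δ := by
    have := hstar_min μ hμ
    rw [hδval]
    linarith
  have claim2 : 2 * qObj w μ - suppVal edge hne w s r = ∑ e, r e * (μ e - μbar e) := by
    rw [hsd, h2q, ← Finset.sum_sub_distrib]
    exact Finset.sum_congr rfl (fun e _ => by ring)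
  have claim1 : 0 ≤ 2 * qObj w μ - suppVal edge hne w s r := by
    rw [hsd, h2q]
    have := hbar_min μ hμ
    have h2 : ∑ e, (μ e / w e) * μbar e = ∑ e, r e * μbar e := rfl
    have h3 : ∑ e, (μ e / w e) * μ e = ∑ e, r e * μ e := rfl
    linarith
  set D := ∑ e, (μ e - μstar e) ^ 2 / w e with hD
  set NN := ∑ e, (μ e - μbar e) ^ 2 / w e with hNN
  have hD0 : 0 ≤ D := Finset.sum_nonneg fun e _ => div_nonneg (sq_nonneg _) (hw e).le
  have hNN0 : 0 ≤ NN := Finset.sum_nonneg fun e _ => div_nonneg (sq_nonneg _) (hw e).le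
  have hG := qObj_first_order edge w hw s μstar hstar_mem hstar_min
  have hGμ := hG μ hμ
  have hGμbar := hG μbar hbar_mem
  have hGid : ∑ e, (μstar e / w e) * (μ e - μstar e) = qObj w μ - qObj w μstar - D / 2 := by
    have h1 : ∀ e, (μstar e / w e) * (μ e - μstar e)
        = (1/2) * (μ e ^ 2 / w e) - (1/2) * (μstar e ^ 2 / w e)
          - (1/2) * ((μ e - μstar e) ^ 2 / w e) := fun e => by ring
    rw [Finset.sum_congr rfl (fun e _ => h1 e), Finset.sum_sub_distrib, Finset.sum_sub_distrib,
      ← Finset.mul_sum, ← Finset.mul_sum, ← Finset.mul_sum]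
    unfold qObj
    rw [hD]
    ring
  have hDle : D ≤ 2 * δ := by
    rw [hδval]
    linarith
  have hT2 : ∑ e, (μstar e / w e) * (μ e - μbar e) ≤ δ - D / 2 := by
    have hsplitT2 : ∑ e, (μstar e / w e) * (μ e - μbar e)
        = (∑ e, (μstar e / w e) * (μ e - μstar e))
          - ∑ e, (μstar e / w e) * (μbar e - μstar e) := by
      rw [← Finset.sum_sub_distrib]
      exact Finset.sum_congr rfl (fun e _ => by ring)
    rw [hδval]
    linarith
  have hT1 : ∑ e, ((μ e - μstar e) / w e) * (μ e - μbar e)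
      ≤ Real.sqrt D * Real.sqrt NN := by
    set f := fun e => (μ e - μstar e) / Real.sqrt (w e) with hf
    set g := fun e => (μ e - μbar e) / Real.sqrt (w e) with hg
    have hfg : ∀ e, ((μ e - μstar e) / w e) * (μ e - μbar e) = f e * g e := by
      intro e
      simp only [hf, hg]
      rw [div_mul_div_comm, Real.mul_self_sqrt (hw e).le]
      ring
    have hsum_f : ∑ e, f e ^ 2 = D := by
      rw [hD]
      exact Finset.sum_congr rfl (fun e _ => by
        simp only [hf]
        rw [div_pow, Real.sq_sqrt (hw e).le])
    have hsum_g : ∑ e, g e ^ 2 = NN := by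
      rw [hNN]
      exact Finset.sum_congr rfl (fun e _ => by
        simp only [hg]
        rw [div_pow, Real.sq_sqrt (hw e).le])
    have hcs := Finset.sum_mul_sq_le_sq_mul_sq univ f g
    rw [hsum_f, hsum_g] at hcs
    rw [Finset.sum_congr rfl (fun e _ => hfg e)]
    rcases le_or_gt (∑ e, f e * g e) 0 with hT0 | hT0
    · exact le_trans hT0 (mul_nonneg (Real.sqrt_nonneg _) (Real.sqrt_nonneg _))
    · have h5 : ∑ e, f e * g e ≤ Real.sqrt (D * NN) := by
        rw [← Real.sqrt_sq hT0.le]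
        exact Real.sqrt_le_sqrt hcs
      rwa [Real.sqrt_mul hD0] at h5
  have hsqrtD : Real.sqrt D ≤ Real.sqrt (2 * δ) := Real.sqrt_le_sqrt hDle
  have hNval : wInvNorm w (fun e => μ e - μbar e) = Real.sqrt NN := rfl
  have claim3 : ∑ e, r e * (μ e - μbar e)
      ≤ δ + Real.sqrt (2 * δ) * wInvNorm w (fun e => μ e - μbar e) := by
    have hsplit : ∑ e, r e * (μ e - μbar e)
        = (∑ e, ((μ e - μstar e) / w e) * (μ e - μbar e))
          + ∑ e, (μstar e / w e) * (μ e - μbar e) := by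
      rw [← Finset.sum_add_distrib]
      apply Finset.sum_congr rfl
      intro e _
      show (μ e / w e) * (μ e - μbar e) = _
      ring
    have h6 : Real.sqrt D * Real.sqrt NN ≤ Real.sqrt (2 * δ) * Real.sqrt NN :=
      mul_le_mul_of_nonneg_right hsqrtD (Real.sqrt_nonneg _)
    rw [hsplit, hNval]
    linarith
  refine ⟨claim1, claim2, claim3, ?_⟩
  intro xr hxr0 hxrf hxropt
  set S := {c : ℝ | ∃ x : V → ℝ, memX0 edge w x ∧
    (∀ e, eRange edge hne x e ≤ r e) ∧ c = ∑ v, s v * x v} with hS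
  have hsupS : suppVal edge hne w s r = sSup S := rfl
  have hmemS : (∑ v, s v * xr v) ∈ S := ⟨xr, hxr0, hxrf, rfl⟩
  have hSub : ∀ c ∈ S, c ≤ ∑ v, s v * xr v := by
    rintro c ⟨y, hy0, hyf, rfl⟩
    exact hxropt y hy0 hyf
  have hsx : suppVal edge hne w s r = ∑ v, s v * xr v := by
    rw [hsupS]
    exact le_antisymm (csSup_le ⟨_, hmemS⟩ hSub) (le_csSup ⟨_, hSub⟩ hmemS)
  have hPset0 : (0:ℝ) ∈ {c : ℝ | ∃ x, memX0 edge w x ∧ c = Pobj edge hne w s x} := by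
    refine ⟨fun _ => 0, ?_, ?_⟩
    · unfold memX0; simp
    · unfold Pobj energyH
      rw [Finset.sum_congr rfl (fun e (_ : e ∈ univ) => by rw [eRange_zero edge hne e])]
      simp
  have hOPT : -qObj w μstar ≤ OPT := by
    apply le_csInf ⟨0, hPset0⟩
    rintro c ⟨y, hy0, rfl⟩
    exact pobj_lower edge hne w hw s y μstar hstar_mem
  have hEn : energyH edge hne w xr ≤ qObj w μ := by
    unfold energyH qObj
    apply mul_le_mul_of_nonneg_left _ (by norm_num)
    apply Finset.sum_le_sum
    intro e _
    have h7 : eRange edge hne xr e ≤ r e := hxrf e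
    have h8 : 0 ≤ eRange edge hne xr e := eRange_nonneg edge hne xr e
    have h9 : w e * (eRange edge hne xr e) ^ 2 ≤ w e * (r e) ^ 2 :=
      mul_le_mul_of_nonneg_left (pow_le_pow_left₀ h8 h7 2) (hw e).le
    have h10 : w e * (r e) ^ 2 = μ e ^ 2 / w e := by
      show w e * (μ e / w e) ^ 2 = _
      have hwne : w e ≠ 0 := (hw e).ne'
      field_simp
    linarith
  have hPxr : Pobj edge hne w s xr = energyH edge hne w xr - ∑ v, s v * xr v := rfl
  have hchain : Pobj edge hne w s xr - OPT ≤ ∑ e, r e * (μ e - μbar e) - δ := by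
    rw [← claim2, hδval, hPxr]
    linarith [hEn, hOPT, hsx]
  linarith [claim3, hchain]


end
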